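/- Let α > 0, σ > 0 and β₁, β₂ be arbitrary real numbers. The quartic polynomial (λ − 1)²(λ − β₁)(λ − β₂) + α²σ²λ² is never Schur stable; that is, it always has a complex root λ with |λ| ≥ 1. Consequently, Jacobi (simultaneous) momentum updates never converge on a bilinear game. -/

import Mathlib

open Polynomial

private lemma half_lt_inv_re (r : ℂ) (h : ‖r‖ < 1) :
    (1:ℝ)/2 < ((1 - r)⁻¹).re := by
  have hsq : Complex.normSq r < 1 := by
    rw [← Complex.sq_norm]
    nlinarith [norm_nonneg r]
  have hre : r.re * r.re + r.im * r.im < 1 := by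
    simpa [Complex.normSq_apply] using hsq
  have hne : (1:ℂ) - r ≠ 0 := by
    intro h0
    have : r = 1 := by linear_combination -h0
    rw [this] at h; simp at h
  have hD : 0 < Complex.normSq (1 - r) := Complex.normSq_pos.mpr hne
  rw [Complex.inv_re, lt_div_iff₀ hD]
  simp only [Complex.normSq_apply, Complex.sub_re, Complex.sub_im, Complex.one_re,
    Complex.one_im]
  nlinarith

private lemma multiset_card_succ {s : Multiset ℂ} {n : ℕ} (h : Multiset.card s = n + 1) :
    ∃ a t, s = a ::ₘ t ∧ Multiset.card t = n := by
  have hpos : 0 < Multiset.card s := by omega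
  obtain ⟨a, ha⟩ := Multiset.card_pos_iff_exists_mem.mp hpos
  obtain ⟨t, rfl⟩ := Multiset.exists_cons_of_mem ha
  exact ⟨a, t, rfl, by simpa using h⟩

private lemma multiset_card_four {s : Multiset ℂ} (h : Multiset.card s = 4) :
    ∃ a b c d : ℂ, s = a ::ₘ b ::ₘ c ::ₘ d ::ₘ 0 := by
  obtain ⟨a, s1, rfl, h1⟩ := multiset_card_succ h
  obtain ⟨b, s2, rfl, h2⟩ := multiset_card_succ h1
  obtain ⟨c, s3, rfl, h3⟩ := multiset_card_succ h2
  obtain ⟨d, s4, rfl, h4⟩ := multiset_card_succ h3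
  exact ⟨a, b, c, d, by simp [Multiset.card_eq_zero.mp h4]⟩

/-- Jacobi momentum on a bilinear game never converges: the characteristic
polynomial `(λ − 1)²(λ − β₁)(λ − β₂) + α²σ²λ²` is never Schur stable, i.e. it
always has a complex root of modulus at least `1`. -/
theorem jacobi_momentum_never_converges (α β₁ β₂ σ : ℝ) (hα : 0 < α) (hσ : 0 < σ) :
    ∃ z : ℂ, (z - 1) ^ 2 * (z - (β₁ : ℂ)) * (z - (β₂ : ℂ)) +
        (α : ℂ) ^ 2 * (σ : ℂ) ^ 2 * z ^ 2 = 0 ∧ 1 ≤ ‖z‖ := by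
  by_contra hcon
  push_neg at hcon
  set c : ℂ := (α : ℂ) ^ 2 * (σ : ℂ) ^ 2 with hc
  have hcre : c = ((α^2 * σ^2 : ℝ) : ℂ) := by push_cast [hc]; ring
  have hcpos : (0:ℝ) < α^2 * σ^2 := by positivity
  have hcne : c ≠ 0 := by
    rw [hcre]
    exact_mod_cast ne_of_gt hcpos
  -- the polynomial
  set P : ℂ[X] := (X - 1)^2 * (X - C (β₁:ℂ)) * (X - C (β₂:ℂ)) + C c * X^2 with hP
  have hQmonic : ((X - 1:ℂ[X])^2 * (X - C (β₁:ℂ)) * (X - C (β₂:ℂ))).Monic := by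
    have : ((X:ℂ[X]) - 1) = X - C 1 := by simp
    rw [this]
    exact (((monic_X_sub_C (1:ℂ)).pow 2).mul (monic_X_sub_C _)).mul (monic_X_sub_C _)
  have hQdeg : ((X - 1:ℂ[X])^2 * (X - C (β₁:ℂ)) * (X - C (β₂:ℂ))).natDegree = 4 := by
    have h1 : ((X:ℂ[X]) - 1) = X - C 1 := by simp
    rw [h1, natDegree_mul (by exact (((monic_X_sub_C (1:ℂ)).pow 2).mul (monic_X_sub_C _)).ne_zero)
      (X_sub_C_ne_zero _),
      natDegree_mul (by exact ((monic_X_sub_C (1:ℂ)).pow 2).ne_zero) (X_sub_C_ne_zero _),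
      natDegree_pow, natDegree_X_sub_C, natDegree_X_sub_C, natDegree_X_sub_C]
  have hdlt : (C c * X^2 : ℂ[X]).degree < ((X - 1:ℂ[X])^2 * (X - C (β₁:ℂ)) * (X - C (β₂:ℂ))).degree := by
    have h2 : (C c * X^2 : ℂ[X]).degree ≤ 2 := by
      refine (degree_mul_le _ _).trans ?_
      simpa [degree_X_pow] using add_le_add_left (degree_C_le (a := c)) 2
    have h4 : ((X - 1:ℂ[X])^2 * (X - C (β₁:ℂ)) * (X - C (β₂:ℂ))).degree = 4 := by
      rw [degree_eq_natDegree hQmonic.ne_zero, hQdeg]; rfl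
    rw [h4]
    exact lt_of_le_of_lt h2 (by norm_num)
  have hmonic : P.Monic := hQmonic.add_of_left hdlt
  have hdeg : P.natDegree = 4 := by
    rw [hP]
    rw [natDegree_add_eq_left_of_degree_lt hdlt, hQdeg]
  have hsplit : P.Splits := IsAlgClosed.splits P
  have hcard : Multiset.card P.roots = 4 := by
    rw [splits_iff_card_roots.mp hsplit, hdeg]
  obtain ⟨r₁, r₂, r₃, r₄, hroots⟩ := multiset_card_four hcard
  have hfac : P = (X - C r₁) * (X - C r₂) * (X - C r₃) * (X - C r₄) := by
    conv_lhs => rw [hsplit.eq_prod_roots_of_monic hmonic]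
    rw [hroots]
    simp [mul_assoc, mul_comm, mul_left_comm]
  -- each root has modulus < 1
  have hroot : ∀ r : ℂ, r ∈ P.roots → ‖r‖ < 1 := by
    intro r hr
    have h0 : P.eval r = 0 := (mem_roots (hmonic.ne_zero)).mp hr
    apply hcon r
    have : (r - 1) ^ 2 * (r - (β₁:ℂ)) * (r - (β₂:ℂ)) + c * r ^ 2 = 0 := by
      simpa [hP] using h0
    rw [hc] at this
    linear_combination this
  have h1 : ‖r₁‖ < 1 := hroot r₁ (by rw [hroots]; simp)
  have h2 : ‖r₂‖ < 1 := hroot r₂ (by rw [hroots]; simp)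
  have h3 : ‖r₃‖ < 1 := hroot r₃ (by rw [hroots]; simp)
  have h4 : ‖r₄‖ < 1 := hroot r₄ (by rw [hroots]; simp)
  set a₁ := 1 - r₁; set a₂ := 1 - r₂; set a₃ := 1 - r₃; set a₄ := 1 - r₄
  have hne : ∀ (r : ℂ), ‖r‖ < 1 → (1 - r) ≠ 0 := by
    intro r hr h
    have : r = 1 := by linear_combination -h
    rw [this] at hr; simp at hr
  have ha₁ : a₁ ≠ 0 := hne r₁ h1
  have ha₂ : a₂ ≠ 0 := hne r₂ h2
  have ha₃ : a₃ ≠ 0 := hne r₃ h3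
  have ha₄ : a₄ ≠ 0 := hne r₄ h4
  -- evaluate P at 1
  have hev1 : a₁ * a₂ * a₃ * a₄ = c := by
    have e1 : P.eval 1 = c := by simp [hP]
    have e2 : P.eval 1 = a₁ * a₂ * a₃ * a₄ := by
      rw [hfac]; simp [a₁, a₂, a₃, a₄]
    rw [← e1, e2]
  -- evaluate P' at 1
  have hev2 : a₂ * a₃ * a₄ + a₁ * a₃ * a₄ + a₁ * a₂ * a₄ + a₁ * a₂ * a₃ = 2 * c := by
    have e1 : (derivative P).eval 1 = 2 * c := by
      rw [hP]
      simp [derivative_mul, derivative_pow]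
      ring
    have e2 : (derivative P).eval 1 =
        a₂ * a₃ * a₄ + a₁ * a₃ * a₄ + a₁ * a₂ * a₄ + a₁ * a₂ * a₃ := by
      rw [hfac]
      simp [derivative_mul, a₁, a₂, a₃, a₄]
      ring
    rw [← e1, e2]
  -- divide: sum of reciprocals = 2
  have hsum : a₁⁻¹ + a₂⁻¹ + a₃⁻¹ + a₄⁻¹ = 2 := by
    field_simp
    linear_combination hev2 - 2 * hev1
  -- take real parts
  have hre : (a₁⁻¹).re + (a₂⁻¹).re + (a₃⁻¹).re + (a₄⁻¹).re = 2 := by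
    have := congrArg Complex.re hsum
    simpa [Complex.add_re] using this
  have g1 := half_lt_inv_re r₁ h1
  have g2 := half_lt_inv_re r₂ h2
  have g3 := half_lt_inv_re r₃ h3
  have g4 := half_lt_inv_re r₄ h4
  simp only [a₁, a₂, a₃, a₄] at hre
  linarith
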